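/- Let σ₁ = ω_n(ξ + √(ξ²−1)) and σ₂ = ω_n(ξ − √(ξ²−1)) with ξ > 1, ω_n > 0, z > 0, and η_{1,2} = 1/2 ∓ (ξ − ω_n/z)/(2√(ξ²−1)). Then the function ṗ_u(t) = (Kz/ω_n²)(σ₁η₁ e^{−σ₁ t} + σ₂η₂ e^{−σ₂ t}), K > 0, has a zero at some finite t ≥ 0 if and only if 1 − (ω_n/z)(ξ − √(ξ²−1)) < 0. -/
import Mathlib

lemma key_aux (A B σ₁ σ₂ : ℝ) (h2 : 0 < σ₂) (h12 : σ₂ < σ₁) (hsum : 0 < A + B) :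
    (∃ t : ℝ, 0 ≤ t ∧ A * Real.exp (-σ₁ * t) + B * Real.exp (-σ₂ * t) = 0) ↔ B < 0 := by
  constructor
  · rintro ⟨t, ht, heq⟩
    by_contra hB
    push_neg at hB
    have he1 : (0:ℝ) < Real.exp (-σ₁ * t) := Real.exp_pos _
    have he12 : Real.exp (-σ₁ * t) ≤ Real.exp (-σ₂ * t) := by
      apply Real.exp_le_exp.mpr; nlinarith
    nlinarith [mul_le_mul_of_nonneg_left he12 hB, mul_pos hsum he1]
  · intro hB
    have hA : 0 < A := by linarith
    have hnB : 0 < -B := by linarith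
    have hAB1 : 1 ≤ A / (-B) := (one_le_div hnB).mpr (by linarith)
    refine ⟨Real.log (A / (-B)) / (σ₁ - σ₂), div_nonneg (Real.log_nonneg hAB1) (by linarith), ?_⟩
    set t := Real.log (A / (-B)) / (σ₁ - σ₂) with ht
    have hst : (σ₁ - σ₂) * t = Real.log (A / (-B)) := by
      rw [ht, mul_div_cancel₀]; linarith
    have h1 : Real.exp (-σ₁ * t) = Real.exp (-σ₂ * t) * (-B / A) := by
      rw [← Real.exp_log (show (0:ℝ) < -B / A from div_pos hnB hA), ← Real.exp_add]
      congr 1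
      have : Real.log (-B / A) = - Real.log (A / (-B)) := by
        rw [← Real.log_inv, inv_div]
      rw [this]; linarith
    rw [h1]
    field_simp
    ring

theorem stmt3 (K z ωn ξ : ℝ) (hK : 0 < K) (hz : 0 < z) (hω : 0 < ωn) (hξ : 1 < ξ) :
    (∃ t : ℝ, 0 ≤ t ∧
      (K * z / ωn ^ 2) *
        ((ωn * (ξ + Real.sqrt (ξ ^ 2 - 1))) *
            (1 / 2 - (ξ - ωn / z) / (2 * Real.sqrt (ξ ^ 2 - 1))) *
              Real.exp (-(ωn * (ξ + Real.sqrt (ξ ^ 2 - 1))) * t) +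
          (ωn * (ξ - Real.sqrt (ξ ^ 2 - 1))) *
            (1 / 2 + (ξ - ωn / z) / (2 * Real.sqrt (ξ ^ 2 - 1))) *
              Real.exp (-(ωn * (ξ - Real.sqrt (ξ ^ 2 - 1))) * t)) = 0) ↔
    1 - (ωn / z) * (ξ - Real.sqrt (ξ ^ 2 - 1)) < 0 := by
  set s := Real.sqrt (ξ ^ 2 - 1) with hsdef
  have hs2 : s ^ 2 = ξ ^ 2 - 1 := Real.sq_sqrt (by nlinarith)
  have hs : 0 < s := Real.sqrt_pos.mpr (by nlinarith)
  have hsξ : s < ξ := by nlinarith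
  set A := ωn * (ξ + s) * (1 / 2 - (ξ - ωn / z) / (2 * s)) with hAdef
  set B := ωn * (ξ - s) * (1 / 2 + (ξ - ωn / z) / (2 * s)) with hBdef
  have hσ2 : 0 < ωn * (ξ - s) := mul_pos hω (by linarith)
  have hσ12 : ωn * (ξ - s) < ωn * (ξ + s) := by nlinarith
  have hsum : 0 < A + B := by
    have : A + B = ωn ^ 2 / z := by
      rw [hAdef, hBdef]; field_simp; ring
    rw [this]; positivity
  have hC : (0:ℝ) < K * z / ωn ^ 2 := by positivity
  have hcond : B < 0 ↔ 1 - (ωn / z) * (ξ - s) < 0 := by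
    have hB' : B = ωn * (ξ - s) * (s + ξ - ωn / z) / (2 * s) := by
      rw [hBdef]; field_simp; ring
    constructor
    · intro h
      rw [hB'] at h
      have h2 : s + ξ - ωn / z < 0 := by
        by_contra hc; push_neg at hc
        have : 0 ≤ ωn * (ξ - s) * (s + ξ - ωn / z) / (2 * s) :=
          div_nonneg (mul_nonneg hσ2.le hc) (by linarith)
        linarith
      have h3 : ξ + s < ωn / z := by linarith
      have h6 := mul_lt_mul_of_pos_right h3 (show (0:ℝ) < ξ - s by linarith)
      nlinarith [h6]
    · intro h
      have h1 : 1 < ωn / z * (ξ - s) := by linarith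
      have h5 : z < ωn * (ξ - s) := by
        rw [div_mul_eq_mul_div, lt_div_iff₀ hz] at h1; linarith
      have h3 : ξ + s < ωn / z := by
        rw [lt_div_iff₀ hz]; nlinarith
      rw [hB']
      have h2 : s + ξ - ωn / z < 0 := by linarith
      have : ωn * (ξ - s) * (s + ξ - ωn / z) < 0 := mul_neg_of_pos_of_neg hσ2 h2
      exact div_neg_of_neg_of_pos this (by linarith)
  rw [← hcond, ← key_aux A B (ωn * (ξ + s)) (ωn * (ξ - s)) hσ2 hσ12 hsum]
  constructor
  · rintro ⟨t, ht, heq⟩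
    refine ⟨t, ht, ?_⟩
    have := mul_eq_zero.mp heq
    rcases this with h | h
    · exact absurd h (ne_of_gt hC)
    · exact h
  · rintro ⟨t, ht, heq⟩
    exact ⟨t, ht, by rw [heq, mul_zero]⟩
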